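/- Let x̂_{k:N} ∈ S^(N−k+1). (a) For every randomized policy f_{k:N}, every j ∈ {k, …, N} and every x ∈ S, V_j(x) ≥ J*_j(x, x̂_{j:N}); consequently C(f_{k:N}, x̂_{k:N}) ≥ G(x̂_{k:N}). (b) If for each j the function f_j is the indicator of a Borel set 𝔻_j with Ḏ_j ⊆ 𝔻_j ⊆ D̄_j (that is, f_j = 1 on 𝔻_j and f_j = 0 elsewhere), then V_j(x) = J*_j(x, x̂_{j:N}) for every j and x; hence C(f_{k:N}, x̂_{k:N}) = G(x̂_{k:N}) and this threshold policy belongs to 𝔓(x̂_{k:N}). -/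

import Mathlib

open MeasureTheory Filter
open scoped ENNReal NNReal Topology

noncomputable section

/-- The state space `S = ℝ² × [0, 2π)`. -/
abbrev S : Type := {x : ℝ × ℝ × ℝ // x.2.2 ∈ Set.Ico (0 : ℝ) (2 * Real.pi)}

/-- The metric `d` on `S`. -/
noncomputable def dS (x y : S) : ℝ :=
  Real.sqrt ((x.1.1 - y.1.1) ^ 2 + (x.1.2.1 - y.1.2.1) ^ 2
    + 2 * (Real.cos x.1.2.2 - Real.cos y.1.2.2) ^ 2
    + 2 * (Real.sin x.1.2.2 - Real.sin y.1.2.2) ^ 2)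

/-- The initial state `x₀ = (0,0,0)`. -/
def origin : S := ⟨(0, 0, 0), ⟨le_rfl, by positivity⟩⟩

/-- `κ` is a Markov kernel on `S`. -/
def IsMarkov (κ : S → Measure S) : Prop :=
  (∀ x, IsProbabilityMeasure (κ x)) ∧
    ∀ A : Set S, MeasurableSet A → Measurable fun x => κ x A

/-- Continuity of a real-valued function with respect to the metric `dS`. -/
def DContinuous (g : S → ℝ) : Prop :=
  ∀ x : S, ∀ ε : ℝ, 0 < ε → ∃ δ : ℝ, 0 < δ ∧ ∀ y : S, dS x y < δ → |g y - g x| < ε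

/-- Openness with respect to the metric `dS`. -/
def DOpen (O : Set S) : Prop :=
  ∀ x ∈ O, ∃ δ : ℝ, 0 < δ ∧ ∀ y : S, dS x y < δ → y ∈ O

/-- Assumption 1 on the kernel `κ`. -/
def Assumption1 (κ : S → Measure S) : Prop :=
  (∀ A : Set S, MeasurableSet A → DContinuous fun x => (κ x A).toReal) ∧
    ∀ O : Set S, DOpen O → O.Nonempty → ∀ x : S, 0 < κ x O

/-- Auxiliary downward value recursion; the first argument is the number
`N + 1 - j` of remaining stages. -/
noncomputable def Jaux (κ : S → Measure S) (c' : ℕ → ℝ) (xhat : ℕ → S) :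
    ℕ → ℕ → S → ℝ≥0∞
  | 0, _, _ => 0
  | m + 1, j, x =>
      min (ENNReal.ofReal (dS x (xhat j) ^ 2) + ∫⁻ y, Jaux κ c' xhat m (j + 1) y ∂(κ x))
        (ENNReal.ofReal (c' j))

/-- The optimal cost-to-go `J*_j(x, x̂_{j:N})`. -/
noncomputable def JJ (κ : S → Measure S) (c' : ℕ → ℝ) (N : ℕ) (xhat : ℕ → S)
    (j : ℕ) (x : S) : ℝ≥0∞ :=
  Jaux κ c' xhat (N + 1 - j) j x

/-- `G_j(x, x̂_{j:N}) = ∫ J*_j(y, x̂_{j:N}) κ(x)(dy)`. -/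
noncomputable def Gj (κ : S → Measure S) (c' : ℕ → ℝ) (N : ℕ) (xhat : ℕ → S)
    (j : ℕ) (x : S) : ℝ≥0∞ :=
  ∫⁻ y, JJ κ c' N xhat j y ∂(κ x)

/-- `G(x̂_{k:N}) = G_k(x₀, x̂_{k:N})`. -/
noncomputable def Gtot (κ : S → Measure S) (c' : ℕ → ℝ) (k N : ℕ) (xhat : ℕ → S) : ℝ≥0∞ :=
  Gj κ c' N xhat k origin

/-- A randomized policy: a tuple of Borel measurable functions `f_j : S → [0,1]`. -/
def IsPolicy (k N : ℕ) (f : ℕ → S → ℝ≥0∞) : Prop :=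
  ∀ j, k ≤ j → j ≤ N → Measurable (f j) ∧ ∀ x, f j x ≤ 1

/-- Auxiliary cost-to-go recursion for a policy; first argument is `N + 1 - j`. -/
noncomputable def Vaux (κ : S → Measure S) (c' : ℕ → ℝ) (xhat : ℕ → S)
    (f : ℕ → S → ℝ≥0∞) : ℕ → ℕ → S → ℝ≥0∞
  | 0, _, _ => 0
  | m + 1, j, x =>
      f j x * (ENNReal.ofReal (dS x (xhat j) ^ 2) + ∫⁻ y, Vaux κ c' xhat f m (j + 1) y ∂(κ x))
        + (1 - f j x) * ENNReal.ofReal (c' j)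

/-- The cost-to-go `V_j` of a policy `f` with estimates `x̂`. -/
noncomputable def VV (κ : S → Measure S) (c' : ℕ → ℝ) (N : ℕ) (xhat : ℕ → S)
    (f : ℕ → S → ℝ≥0∞) (j : ℕ) (x : S) : ℝ≥0∞ :=
  Vaux κ c' xhat f (N + 1 - j) j x

/-- The total expected cost `C(f_{k:N}, x̂_{k:N})`. -/
noncomputable def Cost (κ : S → Measure S) (c' : ℕ → ℝ) (k N : ℕ) (xhat : ℕ → S)
    (f : ℕ → S → ℝ≥0∞) : ℝ≥0∞ :=
  ∫⁻ y, VV κ c' N xhat f k y ∂(κ origin)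

/-- `f ∈ 𝔓(x̂_{k:N})`: `f` minimizes the cost over all randomized policies. -/
def inP (κ : S → Measure S) (c' : ℕ → ℝ) (k N : ℕ) (xhat : ℕ → S)
    (f : ℕ → S → ℝ≥0∞) : Prop :=
  IsPolicy k N f ∧
    ∀ g : ℕ → S → ℝ≥0∞, IsPolicy k N g → Cost κ c' k N xhat f ≤ Cost κ c' k N xhat g

/-- `x̂ ∈ 𝔛(f_{k:N})`: the estimates minimize the cost for the policy `f`. -/
def inX (κ : S → Measure S) (c' : ℕ → ℝ) (k N : ℕ) (f : ℕ → S → ℝ≥0∞)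
    (xhat : ℕ → S) : Prop :=
  ∀ yhat : ℕ → S, Cost κ c' k N xhat f ≤ Cost κ c' k N yhat f

/-- Conditioning a measure on "no transmission" at stage `j`. -/
noncomputable def condMeas (f : ℕ → S → ℝ≥0∞) (j : ℕ) (μ : Measure S) : Measure S :=
  (∫⁻ x, f j x ∂μ)⁻¹ • μ.withDensity (f j)

/-- The predicted measures `μ_{j|j−1}`, by recursion on `j - k`. -/
noncomputable def mupredAux (κ : S → Measure S) (f : ℕ → S → ℝ≥0∞) (k : ℕ) :
    ℕ → Measure S
  | 0 => κ origin
  | n + 1 => (condMeas f (k + n) (mupredAux κ f k n)).bind κ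

/-- `μ_{j|j−1}`. -/
noncomputable def mupred (κ : S → Measure S) (f : ℕ → S → ℝ≥0∞) (k j : ℕ) : Measure S :=
  mupredAux κ f k (j - k)

/-- `q_j = ∫ f_j dμ_{j|j−1}`. -/
noncomputable def qq (κ : S → Measure S) (f : ℕ → S → ℝ≥0∞) (k j : ℕ) : ℝ≥0∞ :=
  ∫⁻ x, f j x ∂(mupred κ f k j)

/-- `μ_{j|j}`. -/
noncomputable def mucond (κ : S → Measure S) (f : ℕ → S → ℝ≥0∞) (k j : ℕ) : Measure S :=
  condMeas f j (mupred κ f k j)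

/-- Non-degeneracy of a policy. -/
def NonDeg (κ : S → Measure S) (f : ℕ → S → ℝ≥0∞) (k N : ℕ) : Prop :=
  ∀ j, k ≤ j → j ≤ N → 0 < qq κ f k j

/-- The closed "no transmission" region `D̄_j`. -/
noncomputable def Dbar (κ : S → Measure S) (c' : ℕ → ℝ) (N : ℕ) (xhat : ℕ → S)
    (j : ℕ) : Set S :=
  {x : S | ENNReal.ofReal (dS x (xhat j) ^ 2) + ∫⁻ y, JJ κ c' N xhat (j + 1) y ∂(κ x)
      ≤ ENNReal.ofReal (c' j)}

/-- The open "no transmission" region `Ḏ_j`. -/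
noncomputable def Dund (κ : S → Measure S) (c' : ℕ → ℝ) (N : ℕ) (xhat : ℕ → S)
    (j : ℕ) : Set S :=
  {x : S | ENNReal.ofReal (dS x (xhat j) ^ 2) + ∫⁻ y, JJ κ c' N xhat (j + 1) y ∂(κ x)
      < ENNReal.ofReal (c' j)}

/-- Hypothesis (H). -/
def HypH (κ : S → Measure S) (c' : ℕ → ℝ) (k N : ℕ) : Prop :=
  ∀ j, k ≤ j → j ≤ N → ∃ xhat : ℕ → S, (Dund κ c' N xhat j).Nonempty

/-- Weak convergence of measures on `(S, dS)`: tested against `dS`-continuous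
bounded functions. -/
def WeakConvS (μl : ℕ → Measure S) (μ : Measure S) : Prop :=
  ∀ h : S → ℝ, DContinuous h → (∃ C : ℝ, ∀ x, |h x| ≤ C) →
    Tendsto (fun l => ∫ x, h x ∂(μl l)) atTop (𝓝 (∫ x, h x ∂μ))

/-- Convergence of a sequence of (non-degenerate) policies to a policy. -/
def PolConv (κ : S → Measure S) (k N : ℕ) (g : ℕ → ℕ → S → ℝ≥0∞)
    (f : ℕ → S → ℝ≥0∞) : Prop :=
  ∀ j, k ≤ j → j ≤ N →
    WeakConvS (fun l => mucond κ (g l) k j) (mucond κ f k j) ∧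
      Tendsto (fun l => qq κ (g l) k j) atTop (𝓝 (qq κ f k j))

/-- (a) Every randomized policy has cost-to-go at least `J*`, so its total cost is
at least `G(x̂_{k:N})`. (b) Any threshold policy given by sets `Ḏ_j ⊆ 𝔻_j ⊆ D̄_j`
achieves `V_j = J*_j`, has cost `G(x̂_{k:N})`, and belongs to `𝔓(x̂_{k:N})`. -/
lemma Jaux_le_Vaux (κ : S → Measure S) (c' : ℕ → ℝ) (xhat : ℕ → S)
    (f : ℕ → S → ℝ≥0∞) :
    ∀ m j, (∀ i, j ≤ i → i < j + m → ∀ x, f i x ≤ 1) →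
      ∀ x, Jaux κ c' xhat m j x ≤ Vaux κ c' xhat f m j x := by
  intro m
  induction m with
  | zero => intro j _ x; simp [Jaux, Vaux]
  | succ m ih =>
    intro j hf x
    have hfx : f j x ≤ 1 := hf j le_rfl (by omega) x
    have hIH : ∀ y, Jaux κ c' xhat m (j + 1) y ≤ Vaux κ c' xhat f m (j + 1) y :=
      ih (j + 1) (fun i h1 h2 x => hf i (by omega) (by omega) x)
    have hint : (∫⁻ y, Jaux κ c' xhat m (j + 1) y ∂(κ x))
        ≤ ∫⁻ y, Vaux κ c' xhat f m (j + 1) y ∂(κ x) :=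
      MeasureTheory.lintegral_mono hIH
    show min (ENNReal.ofReal (dS x (xhat j) ^ 2) + ∫⁻ y, Jaux κ c' xhat m (j + 1) y ∂(κ x))
        (ENNReal.ofReal (c' j))
      ≤ f j x * (ENNReal.ofReal (dS x (xhat j) ^ 2) + ∫⁻ y, Vaux κ c' xhat f m (j + 1) y ∂(κ x))
        + (1 - f j x) * ENNReal.ofReal (c' j)
    set A' := ENNReal.ofReal (dS x (xhat j) ^ 2) + ∫⁻ y, Jaux κ c' xhat m (j + 1) y ∂(κ x)
      with hA'
    set A := ENNReal.ofReal (dS x (xhat j) ^ 2) + ∫⁻ y, Vaux κ c' xhat f m (j + 1) y ∂(κ x)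
      with hA
    set C := ENNReal.ofReal (c' j) with hC
    have hAA : A' ≤ A := add_le_add_right hint _
    calc min A' C = (f j x + (1 - f j x)) * min A' C := by
            rw [add_tsub_cancel_of_le hfx, one_mul]
      _ = f j x * min A' C + (1 - f j x) * min A' C := add_mul _ _ _
      _ ≤ f j x * A + (1 - f j x) * C :=
          add_le_add (mul_le_mul_right (le_trans (min_le_left _ _) hAA) _)
            (mul_le_mul_right (min_le_right _ _) _)

lemma Vaux_eq_Jaux (κ : S → Measure S) (c' : ℕ → ℝ) (k N : ℕ) (xhat : ℕ → S)
    (D : ℕ → Set S) (f : ℕ → S → ℝ≥0∞)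
    (hD : ∀ j, k ≤ j → j ≤ N → Dund κ c' N xhat j ⊆ D j ∧ D j ⊆ Dbar κ c' N xhat j)
    (hf : ∀ j, f j = (D j).indicator fun _ => 1) :
    ∀ m j, j + m = N + 1 → k ≤ j → ∀ x,
      Vaux κ c' xhat f m j x = Jaux κ c' xhat m j x := by
  intro m
  induction m with
  | zero => intro j _ _ x; simp [Jaux, Vaux]
  | succ m ih =>
    intro j hjm hkj x
    have hjN : j ≤ N := by omega
    have hIH : ∀ y, Vaux κ c' xhat f m (j + 1) y = Jaux κ c' xhat m (j + 1) y :=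
      ih (j + 1) (by omega) (by omega)
    have hint : (∫⁻ y, Vaux κ c' xhat f m (j + 1) y ∂(κ x))
        = ∫⁻ y, Jaux κ c' xhat m (j + 1) y ∂(κ x) := by
      exact MeasureTheory.lintegral_congr hIH
    have hJJ : ∀ y, JJ κ c' N xhat (j + 1) y = Jaux κ c' xhat m (j + 1) y := by
      intro y
      unfold JJ
      congr 2
      omega
    show f j x * (ENNReal.ofReal (dS x (xhat j) ^ 2)
          + ∫⁻ y, Vaux κ c' xhat f m (j + 1) y ∂(κ x))
        + (1 - f j x) * ENNReal.ofReal (c' j)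
      = min (ENNReal.ofReal (dS x (xhat j) ^ 2) + ∫⁻ y, Jaux κ c' xhat m (j + 1) y ∂(κ x))
          (ENNReal.ofReal (c' j))
    rw [hint]
    set A' := ENNReal.ofReal (dS x (xhat j) ^ 2) + ∫⁻ y, Jaux κ c' xhat m (j + 1) y ∂(κ x)
      with hA'
    by_cases hx : x ∈ D j
    · have hfx : f j x = 1 := by rw [hf j]; simp [hx]
      have hle : A' ≤ ENNReal.ofReal (c' j) := by
        have := (hD j hkj hjN).2 hx
        simpa only [Dbar, Set.mem_setOf_eq, MeasureTheory.lintegral_congr hJJ] using this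
      rw [hfx, one_mul, tsub_self, zero_mul, add_zero, min_eq_left hle]
    · have hfx : f j x = 0 := by rw [hf j]; simp [hx]
      have hge : ENNReal.ofReal (c' j) ≤ A' := by
        have hnd : x ∉ Dund κ c' N xhat j := fun h => hx ((hD j hkj hjN).1 h)
        have := hnd
        simp only [Dund, Set.mem_setOf_eq, not_lt, MeasureTheory.lintegral_congr hJJ] at this
        exact this
      rw [hfx, zero_mul, tsub_zero, one_mul, zero_add, min_eq_right hge]


theorem threshold_policies_optimal (κ : S → Measure S) (hκ : IsMarkov κ)
    (k N : ℕ) (hkN : k ≤ N) (c' : ℕ → ℝ) (hc' : ∀ j, k ≤ j → j ≤ N → 0 < c' j)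
    (xhat : ℕ → S) :
    -- (a)
    (∀ f : ℕ → S → ℝ≥0∞, IsPolicy k N f →
      (∀ j, k ≤ j → j ≤ N → ∀ x : S, JJ κ c' N xhat j x ≤ VV κ c' N xhat f j x) ∧
        Gtot κ c' k N xhat ≤ Cost κ c' k N xhat f) ∧
    -- (b)
    (∀ (D : ℕ → Set S) (f : ℕ → S → ℝ≥0∞),
      (∀ j, k ≤ j → j ≤ N → MeasurableSet (D j)) →
      (∀ j, k ≤ j → j ≤ N → Dund κ c' N xhat j ⊆ D j ∧ D j ⊆ Dbar κ c' N xhat j) →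
      (∀ j, f j = (D j).indicator fun _ => 1) →
      (∀ j, k ≤ j → j ≤ N → ∀ x : S, VV κ c' N xhat f j x = JJ κ c' N xhat j x) ∧
        Cost κ c' k N xhat f = Gtot κ c' k N xhat ∧
        inP κ c' k N xhat f) := by
  classical
  have parta : ∀ f : ℕ → S → ℝ≥0∞, IsPolicy k N f →
      (∀ j, k ≤ j → j ≤ N → ∀ x : S, JJ κ c' N xhat j x ≤ VV κ c' N xhat f j x) ∧
        Gtot κ c' k N xhat ≤ Cost κ c' k N xhat f := by
    intro f hf
    have h1 : ∀ j, k ≤ j → j ≤ N → ∀ x : S, JJ κ c' N xhat j x ≤ VV κ c' N xhat f j x := by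
      intro j hkj hjN x
      exact Jaux_le_Vaux κ c' xhat f (N + 1 - j) j
        (fun i h1 h2 x => (hf i (le_trans hkj h1) (by omega)).2 x) x
    exact ⟨h1, MeasureTheory.lintegral_mono fun y => h1 k le_rfl hkN y⟩
  refine ⟨parta, ?_⟩
  intro D f hDmeas hD hfind
  have heq : ∀ j, k ≤ j → j ≤ N → ∀ x : S, VV κ c' N xhat f j x = JJ κ c' N xhat j x := by
    intro j hkj hjN x
    exact Vaux_eq_Jaux κ c' k N xhat D f hD hfind (N + 1 - j) j (by omega) hkj x
  have hcost : Cost κ c' k N xhat f = Gtot κ c' k N xhat :=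
    MeasureTheory.lintegral_congr fun y => heq k le_rfl hkN y
  refine ⟨heq, hcost, ?_, ?_⟩
  · intro j hkj hjN
    refine ⟨?_, ?_⟩
    · rw [hfind j]
      exact Measurable.indicator measurable_const (hDmeas j hkj hjN)
    · intro x
      rw [hfind j]
      by_cases hx : x ∈ D j <;> simp [hx]
  · intro g hg
    rw [hcost]
    exact (parta g hg).2


end
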